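/- Let (X, {R_0,...,R_d}) be a symmetric association scheme with Γ = (X, R_1) connected and H the unweighted distribution diagram of R_1. For 0 ≤ h, let I_h = {i : d_H(0,i) = h}, and for i ∈ I_h define c(i) = Σ_{j ∈ I_{h-1}} p_{1j}^i. Then: (a) for any geodesic 0 = ℓ_0, 1 = ℓ_1, ℓ_2, ..., ℓ_h in H, one has 1 = c(ℓ_1) ≤ c(ℓ_2) ≤ ... ≤ c(ℓ_h); (b) if c(i) = 1, then c(ℓ) = 1 for every ℓ ∈ {1,...,d} lying on a geodesic from 0 to i in H; (c) if c(i) = 1, then there is a unique shortest path from 0 to i in H, and for every (a,b) ∈ R_i there is a unique shortest path from a to b in Γ. -/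

import Mathlib

/-- A symmetric association scheme with `d` classes on a finite vertex set `X`:
a partition of `X × X` into nonempty symmetric relations `R 0, …, R d`, where
`R 0` is the identity relation, together with intersection numbers `p i j k`. -/
structure SymAssocScheme (X : Type*) [Fintype X] (d : ℕ) where
  R : Fin (d + 1) → X → X → Prop
  R_nonempty : ∀ i, ∃ a b, R i a b
  R_symm : ∀ i a b, R i a b → R i b a
  R_zero : ∀ a b, R 0 a b ↔ a = b
  R_unique : ∀ a b, ∃! i, R i a b
  p : Fin (d + 1) → Fin (d + 1) → Fin (d + 1) → ℕ
  p_spec : ∀ (i j k : Fin (d + 1)) (a b : X), R k a b →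
    {c : X | R i a c ∧ R j c b}.ncard = p i j k

namespace SymAssocScheme

variable {X : Type*} [Fintype X] {d : ℕ}

/-- The (simple) graph `Γ = (X, R_i)` of the basis relation `R_i`. -/
def graph (A : SymAssocScheme X d) (i : Fin (d + 1)) : SimpleGraph X where
  Adj a b := a ≠ b ∧ A.R i a b
  symm := ⟨fun a b h => ⟨h.1.symm, A.R_symm i a b h.2⟩⟩
  loopless := ⟨fun a h => h.1 rfl⟩

/-- The unweighted distribution diagram `H_i` (with loops discarded):
`j ~ k` iff `p i j k + p i k j > 0`. -/
def diagram (A : SymAssocScheme X d) (i : Fin (d + 1)) : SimpleGraph (Fin (d + 1)) where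
  Adj j k := j ≠ k ∧ 0 < A.p i j k + A.p i k j
  symm := ⟨fun j k h => ⟨h.1.symm, by omega⟩⟩
  loopless := ⟨fun j h => h.1 rfl⟩

end SymAssocScheme

namespace SymAssocScheme

open Finset
open scoped Classical

variable {X : Type*} [Fintype X] {d : ℕ}

lemma R_eq (A : SymAssocScheme X d) {i j : Fin (d+1)} {a b : X}
    (h1 : A.R i a b) (h2 : A.R j a b) : i = j := by
  obtain ⟨k, -, hk⟩ := A.R_unique a b
  rw [hk i h1, hk j h2]

lemma p_card (A : SymAssocScheme X d) (i j k : Fin (d+1)) {a b : X} (h : A.R k a b) :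
    (univ.filter fun c => A.R i a c ∧ A.R j c b).card = A.p i j k := by
  rw [← A.p_spec i j k a b h, Set.ncard_eq_toFinset_card', Set.toFinset_setOf]

lemma p_pos_iff (A : SymAssocScheme X d) (i j k : Fin (d+1)) {a b : X} (h : A.R k a b) :
    0 < A.p i j k ↔ ∃ c, A.R i a c ∧ A.R j c b := by
  rw [← A.p_card i j k h, card_pos, filter_nonempty_iff]
  simp

/-- valency-type identity: `|R_j| * p 1 i j = |R_i| * p 1 j i` via double counting. -/
lemma p_symm_pos (A : SymAssocScheme X d) {i j : Fin (d+1)} (h : 0 < A.p 1 i j) :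
    0 < A.p 1 j i := by
  -- count triples (y, z, w) with R_j y w, R_1 y z, R_i z w
  set T : Finset (X × X × X) :=
    univ.filter (fun t => A.R j t.1 t.2.2 ∧ A.R 1 t.1 t.2.1 ∧ A.R i t.2.1 t.2.2) with hT
  have count1 : T.card = ∑ yw ∈ univ.filter (fun yw : X × X => A.R j yw.1 yw.2),
      (T.filter (fun t => (t.1, t.2.2) = yw)).card := by
    apply card_eq_sum_card_fiberwise
    intro t ht
    simp only [hT, mem_coe, mem_filter, mem_univ, true_and] at ht ⊢
    exact ht.1
  have count2 : T.card = ∑ zw ∈ univ.filter (fun zw : X × X => A.R i zw.1 zw.2),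
      (T.filter (fun t => t.2 = zw)).card := by
    apply card_eq_sum_card_fiberwise
    intro t ht
    simp only [hT, mem_coe, mem_filter, mem_univ, true_and] at ht ⊢
    exact ht.2.2
  have fib1 : ∀ yw ∈ univ.filter (fun yw : X × X => A.R j yw.1 yw.2),
      (T.filter (fun t => (t.1, t.2.2) = yw)).card = A.p 1 i j := by
    rintro ⟨y, w⟩ hyw
    simp only [mem_filter, mem_univ, true_and] at hyw
    rw [← A.p_card 1 i j hyw]
    apply card_nbij (fun t => t.2.1)
    · rintro ⟨y', z, w'⟩ ht
      simp only [hT, mem_coe, mem_filter, mem_univ, true_and, Prod.mk.injEq] at ht ⊢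
      obtain ⟨⟨h1, h2, h3⟩, h4, h5⟩ := ht
      subst h4; subst h5
      exact ⟨h2, h3⟩
    · rintro ⟨y1, z1, w1⟩ h1 ⟨y2, z2, w2⟩ h2 hz
      simp only [hT, coe_filter, Set.mem_setOf_eq, mem_univ, true_and,
        Prod.mk.injEq] at h1 h2 hz ⊢
      obtain ⟨-, rfl, rfl⟩ := h1
      obtain ⟨-, rfl, rfl⟩ := h2
      simp_all
    · intro z hz
      simp only [coe_filter, mem_univ, true_and, Set.mem_setOf_eq] at hz
      refine ⟨(y, z, w), ?_, rfl⟩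
      simp only [hT, mem_coe, mem_filter, mem_univ, true_and, Prod.mk.injEq, and_true]
      exact ⟨hyw, hz.1, hz.2⟩
  have fib2 : ∀ zw ∈ univ.filter (fun zw : X × X => A.R i zw.1 zw.2),
      (T.filter (fun t => t.2 = zw)).card = A.p 1 j i := by
    rintro ⟨z, w⟩ hzw
    simp only [mem_filter, mem_univ, true_and] at hzw
    rw [← A.p_card 1 j i hzw]
    apply card_nbij (fun t => t.1)
    · rintro ⟨y', z', w'⟩ ht
      simp only [hT, mem_coe, mem_filter, mem_univ, true_and, Prod.mk.injEq] at ht ⊢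
      obtain ⟨⟨h1, h2, h3⟩, h4, h5⟩ := ht
      cases h4; cases h5
      exact ⟨A.R_symm _ _ _ h2, h1⟩
    · rintro ⟨y1, z1, w1⟩ h1 ⟨y2, z2, w2⟩ h2 hy
      simp only [hT, coe_filter, Set.mem_setOf_eq, mem_univ, true_and,
        Prod.mk.injEq] at h1 h2 hy ⊢
      obtain ⟨-, rfl, rfl⟩ := h1.2
      obtain ⟨-, rfl, rfl⟩ := h2.2
      simp_all
    · intro y hy
      simp only [coe_filter, mem_univ, true_and, Set.mem_setOf_eq] at hy
      refine ⟨(y, z, w), ?_, rfl⟩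
      simp only [hT, mem_coe, mem_filter, mem_univ, true_and, Prod.mk.injEq, and_true]
      exact ⟨hy.2, A.R_symm _ _ _ hy.1, hzw⟩
  rw [sum_congr rfl fib1, sum_const, smul_eq_mul] at count1
  rw [sum_congr rfl fib2, sum_const, smul_eq_mul] at count2
  -- R_i nonempty gives the i-filter nonempty; p 1 i j > 0 and R_j nonempty give T ≠ 0
  obtain ⟨a, b, hab⟩ := A.R_nonempty j
  have hTpos : 0 < T.card := by
    obtain ⟨z, hz1, hz2⟩ := (A.p_pos_iff 1 i j hab).mp h
    have : (a, z, b) ∈ T := by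
      simp only [hT, mem_filter, mem_univ, true_and]
      exact ⟨hab, hz1, hz2⟩
    exact card_pos.mpr ⟨_, this⟩
  rw [count2] at hTpos
  exact Nat.pos_of_ne_zero fun h0 => by simp [h0] at hTpos


lemma fin_one_ne_zero (hd : 0 < d) : (1 : Fin (d + 1)) ≠ 0 := by
  intro h
  have := congrArg Fin.val h
  simp [Fin.val_one'] at this
  omega

lemma ne_of_R_one (A : SymAssocScheme X d) (hd : 0 < d) {a b : X} (h : A.R 1 a b) : a ≠ b := by
  rintro rfl
  exact fin_one_ne_zero hd (A.R_eq h ((A.R_zero a a).mpr rfl))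

lemma adj_of_R_one (A : SymAssocScheme X d) (hd : 0 < d) {a b : X} (h : A.R 1 a b) :
    (A.graph 1).Adj a b := ⟨A.ne_of_R_one hd h, h⟩

lemma diagram_adj (A : SymAssocScheme X d) {j k : Fin (d + 1)} (hne : j ≠ k)
    (h : 0 < A.p 1 j k) : (A.diagram 1).Adj j k := ⟨hne, by omega⟩

/-- every class of a pair at Γ-distance n is within H-distance n of 0, and reachable. -/
lemma reach_and_le (A : SymAssocScheme X d) (hd : 0 < d) (hconn : (A.graph 1).Connected) :
    ∀ (n : ℕ) (a b : X) (i : Fin (d + 1)), A.R i a b → (A.graph 1).dist a b = n →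
      (A.diagram 1).Reachable 0 i ∧ (A.diagram 1).dist 0 i ≤ n := by
  intro n
  induction n using Nat.strong_induction_on with
  | _ n IH =>
    intro a b i hab hdist
    rcases eq_or_ne a b with rfl | hne
    · have hi : i = 0 := A.R_eq hab ((A.R_zero a a).mpr rfl)
      subst hi
      exact ⟨SimpleGraph.Reachable.refl 0, by rw [SimpleGraph.dist_self]; omega⟩
    · have hpos : 0 < n := hdist ▸ hconn.pos_dist_of_ne hne
      obtain ⟨w, hw⟩ := hconn.exists_walk_length_eq_dist a b
      rw [hdist] at hw
      cases w with
      | nil => simp at hw; omega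
      | cons hadj q =>
        rename_i cc
        simp only [SimpleGraph.Walk.length_cons] at hw
        have hqd : (A.graph 1).dist cc b = n - 1 := by
          have h1 : (A.graph 1).dist cc b ≤ n - 1 := by
            have := SimpleGraph.dist_le q
            omega
          obtain ⟨g, hg⟩ := hconn.exists_walk_length_eq_dist cc b
          have h2 := SimpleGraph.dist_le (SimpleGraph.Walk.cons hadj g)
          simp only [SimpleGraph.Walk.length_cons, hg, hdist] at h2
          omega
        obtain ⟨j, hj, -⟩ := A.R_unique cc b
        obtain ⟨hreach, hle⟩ := IH (n - 1) (by omega) cc b j hj hqd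
        have hp : 0 < A.p 1 j i := (A.p_pos_iff 1 j i hab).mpr ⟨cc, hadj.2, hj⟩
        rcases eq_or_ne j i with rfl | hji
        · exact ⟨hreach, by omega⟩
        · have hHadj : (A.diagram 1).Adj j i := A.diagram_adj hji hp
          refine ⟨hreach.trans hHadj.reachable, ?_⟩
          obtain ⟨g, hg⟩ := hreach.exists_walk_length_eq_dist
          have := SimpleGraph.dist_le (g.concat hHadj)
          rw [SimpleGraph.Walk.length_concat, hg] at this
          omega

lemma diagram_connected (A : SymAssocScheme X d) (hd : 0 < d)
    (hconn : (A.graph 1).Connected) : (A.diagram 1).Connected := by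
  have key : ∀ i : Fin (d + 1), (A.diagram 1).Reachable 0 i := by
    intro i
    obtain ⟨a, b, hab⟩ := A.R_nonempty i
    exact (A.reach_and_le hd hconn _ a b i hab rfl).1
  exact ⟨fun i k => (key i).symm.trans (key k)⟩

lemma le_dist (A : SymAssocScheme X d) (hd : 0 < d) (hconn : (A.graph 1).Connected) :
    ∀ (n : ℕ) (i : Fin (d + 1)) (a b : X), (A.diagram 1).dist 0 i = n → A.R i a b →
      (A.graph 1).dist a b ≤ n := by
  have Hconn := A.diagram_connected hd hconn
  intro n
  induction n using Nat.strong_induction_on with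
  | _ n IH =>
    intro i a b hdist hab
    rcases eq_or_ne i 0 with rfl | hi0
    · have : a = b := (A.R_zero a b).mp hab
      subst this
      rw [SimpleGraph.dist_self]
      omega
    · have hpos : 0 < n := by
        rcases Nat.eq_zero_or_pos n with h0 | h
        · exfalso
          exact hi0 ((Hconn.dist_eq_zero_iff.mp (hdist.trans h0)).symm)
        · exact h
      obtain ⟨w, hw⟩ := Hconn.exists_walk_length_eq_dist 0 i
      rw [hdist] at hw
      obtain ⟨j, hadj, q, hq⟩ := SimpleGraph.Walk.exists_eq_cons_of_ne hi0 w.reverse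
      have hwr : q.length = n - 1 := by
        have h3 : w.reverse.length = n := by rw [SimpleGraph.Walk.length_reverse, hw]
        rw [hq, SimpleGraph.Walk.length_cons] at h3
        omega
      have hjd : (A.diagram 1).dist 0 j = n - 1 := by
        have h1 : (A.diagram 1).dist 0 j ≤ n - 1 := by
          have := SimpleGraph.dist_le q.reverse
          rw [SimpleGraph.Walk.length_reverse, hwr] at this
          omega
        have h2 : (A.diagram 1).dist 0 i ≤ (A.diagram 1).dist 0 j + 1 := by
          calc (A.diagram 1).dist 0 i ≤ (A.diagram 1).dist 0 j + (A.diagram 1).dist j i :=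
                Hconn.dist_triangle
            _ ≤ (A.diagram 1).dist 0 j + 1 := by
                have := (SimpleGraph.dist_eq_one_iff_adj).mpr hadj.symm
                omega
        omega
      -- from Adj i j, get p 1 j i > 0
      have hp : 0 < A.p 1 j i := by
        rcases Nat.eq_zero_or_pos (A.p 1 j i) with h0 | h
        · have : 0 < A.p 1 i j := by have := hadj.2; omega
          have := A.p_symm_pos this
          omega
        · exact h
      obtain ⟨cc, hc1, hc2⟩ := (A.p_pos_iff 1 j i hab).mp hp
      have hcb : (A.graph 1).dist cc b ≤ n - 1 := IH (n - 1) (by omega) j cc b hjd hc2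
      obtain ⟨g, hg⟩ := hconn.exists_walk_length_eq_dist cc b
      have := SimpleGraph.dist_le (SimpleGraph.Walk.cons (A.adj_of_R_one hd hc1) g)
      simp only [SimpleGraph.Walk.length_cons, hg] at this
      omega

lemma dist_eq_dist (A : SymAssocScheme X d) (hd : 0 < d) (hconn : (A.graph 1).Connected)
    {i : Fin (d + 1)} {a b : X} (hab : A.R i a b) :
    (A.graph 1).dist a b = (A.diagram 1).dist 0 i := by
  have h1 := (A.reach_and_le hd hconn _ a b i hab rfl).2
  have h2 := A.le_dist hd hconn _ i a b rfl hab
  omega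


/-- the distribution-diagram sum `c i` counts neighbours of `a` closer to `b`. -/
lemma sum_c_card (A : SymAssocScheme X d) (hd : 0 < d) (hconn : (A.graph 1).Connected)
    {i : Fin (d + 1)} {a b : X} (hab : A.R i a b) :
    ∑ j ∈ univ.filter (fun j : Fin (d + 1) =>
        (A.diagram 1).dist 0 j + 1 = (A.diagram 1).dist 0 i), A.p 1 j i
    = (univ.filter fun w : X => (A.graph 1).Adj a w ∧
        (A.graph 1).dist w b + 1 = (A.diagram 1).dist 0 i).card := by
  have hset : (univ.filter fun w : X => (A.graph 1).Adj a w ∧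
      (A.graph 1).dist w b + 1 = (A.diagram 1).dist 0 i)
      = (univ.filter (fun j : Fin (d + 1) =>
          (A.diagram 1).dist 0 j + 1 = (A.diagram 1).dist 0 i)).biUnion
        (fun j => univ.filter fun w : X => A.R 1 a w ∧ A.R j w b) := by
    ext w
    simp only [mem_filter, mem_univ, true_and, mem_biUnion]
    constructor
    · rintro ⟨hadj, hdw⟩
      obtain ⟨j, hj, -⟩ := A.R_unique w b
      have : (A.graph 1).dist w b = (A.diagram 1).dist 0 j := A.dist_eq_dist hd hconn hj
      exact ⟨j, by omega, hadj.2, hj⟩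
    · rintro ⟨j, hj, h1, hjw⟩
      have : (A.graph 1).dist w b = (A.diagram 1).dist 0 j := A.dist_eq_dist hd hconn hjw
      exact ⟨A.adj_of_R_one hd h1, by omega⟩
  rw [hset, card_biUnion]
  · exact sum_congr rfl fun j _ => (A.p_card 1 j i hab).symm
  · intro j1 h1 j2 h2 hne
    simp only [disjoint_left, mem_filter, mem_univ, true_and]
    rintro w ⟨-, hw1⟩ ⟨-, hw2⟩
    exact hne (A.R_eq hw1 hw2)

lemma sum_c_pos (A : SymAssocScheme X d) (hd : 0 < d) (hconn : (A.graph 1).Connected)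
    {i : Fin (d + 1)} (hi : i ≠ 0) :
    0 < ∑ j ∈ univ.filter (fun j : Fin (d + 1) =>
        (A.diagram 1).dist 0 j + 1 = (A.diagram 1).dist 0 i), A.p 1 j i := by
  obtain ⟨a, b, hab⟩ := A.R_nonempty i
  rw [A.sum_c_card hd hconn hab]
  have hne : a ≠ b := fun h => hi (A.R_eq hab ((A.R_zero a b).mpr h))
  have hD : (A.graph 1).dist a b = (A.diagram 1).dist 0 i := A.dist_eq_dist hd hconn hab
  have hpos : 0 < (A.graph 1).dist a b := hconn.pos_dist_of_ne hne
  obtain ⟨w, hw⟩ := hconn.exists_walk_length_eq_dist a b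
  rw [card_pos]
  cases w with
  | nil => simp [SimpleGraph.dist_self] at hpos
  | cons hadj q =>
    rename_i cc
    simp only [SimpleGraph.Walk.length_cons] at hw
    refine ⟨cc, ?_⟩
    simp only [mem_filter, mem_univ, true_and]
    refine ⟨hadj, ?_⟩
    have h1 : (A.graph 1).dist cc b ≤ (A.graph 1).dist a b - 1 := by
      have := SimpleGraph.dist_le q
      omega
    obtain ⟨g, hg⟩ := hconn.exists_walk_length_eq_dist cc b
    have h2 := SimpleGraph.dist_le (SimpleGraph.Walk.cons hadj g)
    simp only [SimpleGraph.Walk.length_cons, hg] at h2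
    omega

lemma sum_c_one (A : SymAssocScheme X d) (hd : 0 < d) (hconn : (A.graph 1).Connected) :
    ∑ j ∈ univ.filter (fun j : Fin (d + 1) =>
        (A.diagram 1).dist 0 j + 1 = (A.diagram 1).dist 0 1), A.p 1 j 1 = 1 := by
  obtain ⟨a, b, hab⟩ := A.R_nonempty 1
  rw [A.sum_c_card hd hconn hab]
  have hadj : (A.graph 1).Adj a b := A.adj_of_R_one hd hab
  have hD : (A.diagram 1).dist 0 1 = 1 := by
    rw [← A.dist_eq_dist hd hconn hab, SimpleGraph.dist_eq_one_iff_adj]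
    exact hadj
  rw [hD]
  have : (univ.filter fun w : X => (A.graph 1).Adj a w ∧ (A.graph 1).dist w b + 1 = 1)
      = {b} := by
    ext w
    simp only [mem_filter, mem_univ, true_and, mem_singleton]
    constructor
    · rintro ⟨h1, h2⟩
      have : (A.graph 1).dist w b = 0 := by omega
      exact (hconn.dist_eq_zero_iff).mp this
    · rintro rfl
      exact ⟨hadj, by rw [SimpleGraph.dist_self]⟩
  rw [this, card_singleton]

lemma sum_c_mono_step (A : SymAssocScheme X d) (hd : 0 < d) (hconn : (A.graph 1).Connected)
    {j k : Fin (d + 1)} (hadj : (A.diagram 1).Adj j k)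
    (hdd : (A.diagram 1).dist 0 j + 1 = (A.diagram 1).dist 0 k) :
    (∑ j' ∈ univ.filter (fun j' : Fin (d + 1) =>
        (A.diagram 1).dist 0 j' + 1 = (A.diagram 1).dist 0 j), A.p 1 j' j)
    ≤ ∑ j' ∈ univ.filter (fun j' : Fin (d + 1) =>
        (A.diagram 1).dist 0 j' + 1 = (A.diagram 1).dist 0 k), A.p 1 j' k := by
  have Hconn := A.diagram_connected hd hconn
  rcases eq_or_ne j 0 with rfl | hj0
  · have : (univ.filter (fun j' : Fin (d + 1) =>
        (A.diagram 1).dist 0 j' + 1 = (A.diagram 1).dist 0 0)) = ∅ := by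
      ext j'
      simp [SimpleGraph.dist_self]
    rw [this, sum_empty]
    omega
  · set s := (A.diagram 1).dist 0 j with hs
    have hspos : 0 < s := Hconn.pos_dist_of_ne (Ne.symm hj0)
    -- get configuration (y, x) ∈ R_k, (y, z) ∈ R_j, z adjacent x
    have hp : 0 < A.p 1 j k := by
      rcases Nat.eq_zero_or_pos (A.p 1 j k) with h0 | h
      · have : 0 < A.p 1 k j := by have := hadj.2; omega
        have := A.p_symm_pos this
        omega
      · exact h
    obtain ⟨x, y, hxy⟩ := A.R_nonempty k
    obtain ⟨z, hz1, hz2⟩ := (A.p_pos_iff 1 j k hxy).mp hp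
    have hyx : A.R k y x := A.R_symm _ _ _ hxy
    have hyz : A.R j y z := A.R_symm _ _ _ hz2
    have hzx : (A.graph 1).Adj x z := A.adj_of_R_one hd hz1
    rw [A.sum_c_card hd hconn hyz, A.sum_c_card hd hconn hyx]
    apply card_le_card
    intro w hw
    simp only [mem_filter, mem_univ, true_and] at hw ⊢
    obtain ⟨hw1, hw2⟩ := hw
    refine ⟨hw1, ?_⟩
    rw [← hs] at hw2
    have hdzx : (A.graph 1).dist z x = 1 := by
      rw [SimpleGraph.dist_eq_one_iff_adj]
      exact hzx.symm
    have hdyx : (A.graph 1).dist y x = s + 1 := by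
      rw [A.dist_eq_dist hd hconn hyx, ← hdd, hs]
    have hdyw : (A.graph 1).dist y w = 1 := by
      rw [SimpleGraph.dist_eq_one_iff_adj]
      exact hw1
    have t1 : (A.graph 1).dist w x ≤ (A.graph 1).dist w z + (A.graph 1).dist z x :=
      hconn.dist_triangle
    have t2 : (A.graph 1).dist y x ≤ (A.graph 1).dist y w + (A.graph 1).dist w x :=
      hconn.dist_triangle
    omega

lemma sum_c_mono_geo (A : SymAssocScheme X d) (hd : 0 < d) (hconn : (A.graph 1).Connected)
    {l i : Fin (d + 1)}
    (hgeo : (A.diagram 1).dist 0 l + (A.diagram 1).dist l i = (A.diagram 1).dist 0 i) :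
    (∑ j' ∈ univ.filter (fun j' : Fin (d + 1) =>
        (A.diagram 1).dist 0 j' + 1 = (A.diagram 1).dist 0 l), A.p 1 j' l)
    ≤ ∑ j' ∈ univ.filter (fun j' : Fin (d + 1) =>
        (A.diagram 1).dist 0 j' + 1 = (A.diagram 1).dist 0 i), A.p 1 j' i := by
  have Hconn := A.diagram_connected hd hconn
  obtain ⟨w, hw⟩ := Hconn.exists_walk_length_eq_dist l i
  rw [← hw] at hgeo
  clear hw
  induction w with
  | nil => simp
  | cons h q IH =>
    rename_i u m v
    simp only [SimpleGraph.Walk.length_cons] at hgeo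
    have hdm : (A.diagram 1).dist 0 m = (A.diagram 1).dist 0 u + 1 := by
      have h1 : (A.diagram 1).dist 0 m ≤ (A.diagram 1).dist 0 u + 1 := by
        have t := Hconn.dist_triangle (u := (0 : Fin (d+1))) (v := u) (w := m)
        have := (SimpleGraph.dist_eq_one_iff_adj).mpr h
        omega
      have h2 : (A.diagram 1).dist 0 v ≤ (A.diagram 1).dist 0 m + q.length := by
        have t := Hconn.dist_triangle (u := (0 : Fin (d+1))) (v := m) (w := v)
        have := SimpleGraph.dist_le q
        omega
      omega
    have step := A.sum_c_mono_step hd hconn h (by omega)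
    refine le_trans step (IH ?_)
    omega


lemma unique_geo_graph (A : SymAssocScheme X d) (hd : 0 < d) (hconn : (A.graph 1).Connected) :
    ∀ (n : ℕ) (i : Fin (d + 1)), (A.diagram 1).dist 0 i = n →
      (i = 0 ∨ (∑ j ∈ univ.filter (fun j : Fin (d + 1) =>
        (A.diagram 1).dist 0 j + 1 = (A.diagram 1).dist 0 i), A.p 1 j i) = 1) →
      ∀ a b : X, A.R i a b →
        ∃! q : (A.graph 1).Walk a b, q.IsPath ∧ q.length = (A.graph 1).dist a b := by
  have Hconn := A.diagram_connected hd hconn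
  intro n
  induction n using Nat.strong_induction_on with
  | _ n IH =>
    intro i hdist hci a b hab
    rcases Nat.eq_zero_or_pos n with rfl | hnpos
    · have hi0 : i = 0 := (Hconn.dist_eq_zero_iff.mp hdist).symm
      subst hi0
      have : a = b := (A.R_zero a b).mp hab
      subst this
      rw [SimpleGraph.dist_self]
      refine ⟨SimpleGraph.Walk.nil, ⟨SimpleGraph.Walk.IsPath.nil, rfl⟩, ?_⟩
      rintro q ⟨-, hq⟩
      exact SimpleGraph.Walk.nil_iff_eq_nil.mp (SimpleGraph.Walk.length_eq_zero_iff.mp hq)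
    · have hi0 : i ≠ 0 := by
        rintro rfl
        rw [SimpleGraph.dist_self] at hdist
        omega
      have hci' := hci.resolve_left hi0
      have hD : (A.graph 1).dist a b = n := (A.dist_eq_dist hd hconn hab).trans hdist
      rw [A.sum_c_card hd hconn hab, hdist] at hci'
      obtain ⟨w0, hw0⟩ := card_eq_one.mp hci'
      have hw0mem : w0 ∈ (univ.filter fun w : X => (A.graph 1).Adj a w ∧
          (A.graph 1).dist w b + 1 = n) := hw0 ▸ mem_singleton_self w0
      simp only [mem_filter, mem_univ, true_and] at hw0mem
      obtain ⟨hadj0, hdw0⟩ := hw0mem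
      obtain ⟨j, hj, -⟩ := A.R_unique w0 b
      have hdj : (A.diagram 1).dist 0 j = n - 1 := by
        have := A.dist_eq_dist hd hconn hj
        omega
      have hcj : j = 0 ∨ (∑ j' ∈ univ.filter (fun j' : Fin (d + 1) =>
          (A.diagram 1).dist 0 j' + 1 = (A.diagram 1).dist 0 j), A.p 1 j' j) = 1 := by
        rcases eq_or_ne j 0 with rfl | hj0
        · exact Or.inl rfl
        · right
          have hadjji : (A.diagram 1).Adj j i := by
            refine A.diagram_adj (fun h => by rw [h] at hdj; omega) ?_
            exact (A.p_pos_iff 1 j i hab).mpr ⟨w0, hadj0.2, hj⟩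
          have hgeo : (A.diagram 1).dist 0 j + (A.diagram 1).dist j i
              = (A.diagram 1).dist 0 i := by
            rw [SimpleGraph.dist_eq_one_iff_adj.mpr hadjji, hdist, hdj]
            omega
          have hle := A.sum_c_mono_geo hd hconn hgeo
          have hge := A.sum_c_pos hd hconn hj0
          omega
      obtain ⟨q0, ⟨hq0path, hq0len⟩, hq0uniq⟩ := IH (n - 1) (by omega) j hdj hcj w0 b hj
      have hdw0b : (A.graph 1).dist w0 b = n - 1 := by omega
      set q : (A.graph 1).Walk a b := SimpleGraph.Walk.cons hadj0 q0 with hqdef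
      have hqlen : q.length = (A.graph 1).dist a b := by
        rw [hqdef, SimpleGraph.Walk.length_cons, hq0len, hdw0b, hD]
        omega
      refine ⟨q, ⟨q.isPath_of_length_eq_dist hqlen, hqlen⟩, ?_⟩
      rintro q' ⟨hq'path, hq'len⟩
      cases q' with
      | nil =>
        exfalso
        rw [SimpleGraph.dist_self] at hD
        omega
      | cons h2 r =>
        rename_i w'
        simp only [SimpleGraph.Walk.length_cons, hD] at hq'len
        have hw'mem : w' ∈ (univ.filter fun w : X => (A.graph 1).Adj a w ∧
            (A.graph 1).dist w b + 1 = n) := by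
          simp only [mem_filter, mem_univ, true_and]
          refine ⟨h2, ?_⟩
          have h1 : (A.graph 1).dist w' b ≤ n - 1 := by
            have := SimpleGraph.dist_le r
            omega
          obtain ⟨g, hg⟩ := hconn.exists_walk_length_eq_dist w' b
          have h2' := SimpleGraph.dist_le (SimpleGraph.Walk.cons h2 g)
          simp only [SimpleGraph.Walk.length_cons, hg, hD] at h2'
          omega
        rw [hw0] at hw'mem
        have hw'eq : w' = w0 := mem_singleton.mp hw'mem
        subst hw'eq
        have hreq : r = q0 := by
          refine hq0uniq r ⟨hq'path.of_cons, ?_⟩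
          rw [hdw0b]
          omega
        rw [hreq]

lemma unique_geo_diagram (A : SymAssocScheme X d) (hd : 0 < d)
    (hconn : (A.graph 1).Connected) :
    ∀ (n : ℕ) (i : Fin (d + 1)), (A.diagram 1).dist 0 i = n →
      (i = 0 ∨ (∑ j ∈ univ.filter (fun j : Fin (d + 1) =>
        (A.diagram 1).dist 0 j + 1 = (A.diagram 1).dist 0 i), A.p 1 j i) = 1) →
      ∃! q : (A.diagram 1).Walk i 0,
        q.IsPath ∧ q.length = (A.diagram 1).dist i 0 := by
  have Hconn := A.diagram_connected hd hconn
  intro n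
  induction n using Nat.strong_induction_on with
  | _ n IH =>
    intro i hdist hci
    rcases Nat.eq_zero_or_pos n with rfl | hnpos
    · have hi0 : i = 0 := (Hconn.dist_eq_zero_iff.mp hdist).symm
      subst hi0
      rw [SimpleGraph.dist_self]
      refine ⟨SimpleGraph.Walk.nil, ⟨SimpleGraph.Walk.IsPath.nil, rfl⟩, ?_⟩
      rintro q ⟨-, hq⟩
      exact SimpleGraph.Walk.nil_iff_eq_nil.mp (SimpleGraph.Walk.length_eq_zero_iff.mp hq)
    · have hi0 : i ≠ 0 := by
        rintro rfl
        rw [SimpleGraph.dist_self] at hdist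
        omega
      have hci' := hci.resolve_left hi0
      have hDio : (A.diagram 1).dist i 0 = n := by rw [SimpleGraph.dist_comm]; exact hdist
      -- the unique predecessor j
      have hqual : ∀ j : Fin (d + 1), (A.diagram 1).Adj i j →
          (A.diagram 1).dist 0 j = n - 1 → 0 < A.p 1 j i ∧
          j ∈ univ.filter (fun j' : Fin (d + 1) =>
            (A.diagram 1).dist 0 j' + 1 = (A.diagram 1).dist 0 i) := by
        intro j hadj hdj
        have hp : 0 < A.p 1 j i := by
          rcases Nat.eq_zero_or_pos (A.p 1 j i) with h0 | h
          · have : 0 < A.p 1 i j := by have := hadj.2; omega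
            have := A.p_symm_pos this
            omega
          · exact h
        refine ⟨hp, ?_⟩
        simp only [mem_filter, mem_univ, true_and]
        omega
      -- existence of some predecessor
      obtain ⟨w, hw⟩ := Hconn.exists_walk_length_eq_dist i 0
      rw [hDio] at hw
      obtain ⟨j, hadj, q1, hq1⟩ := SimpleGraph.Walk.exists_eq_cons_of_ne hi0 w
      have hq1len : q1.length = n - 1 := by
        have := congrArg SimpleGraph.Walk.length hq1
        simp only [SimpleGraph.Walk.length_cons, hw] at this
        omega
      have hdj : (A.diagram 1).dist 0 j = n - 1 := by
        have h1 : (A.diagram 1).dist 0 j ≤ n - 1 := by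
          have := SimpleGraph.dist_le q1.reverse
          rw [SimpleGraph.Walk.length_reverse, hq1len] at this
          omega
        have h2 : (A.diagram 1).dist 0 i ≤ (A.diagram 1).dist 0 j + 1 := by
          have t := Hconn.dist_triangle (u := (0 : Fin (d+1))) (v := j) (w := i)
          have : (A.diagram 1).dist j i = 1 :=
            SimpleGraph.dist_eq_one_iff_adj.mpr hadj.symm
          omega
        omega
      -- uniqueness of the predecessor
      have huniqj : ∀ j' : Fin (d + 1), (A.diagram 1).Adj i j' →
          (A.diagram 1).dist 0 j' = n - 1 → j' = j := by
        intro j' hadj' hdj'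
        by_contra hne
        obtain ⟨hp, hmem⟩ := hqual j hadj hdj
        obtain ⟨hp', hmem'⟩ := hqual j' hadj' hdj'
        have hsub : {j', j} ⊆ univ.filter (fun j'' : Fin (d + 1) =>
            (A.diagram 1).dist 0 j'' + 1 = (A.diagram 1).dist 0 i) := by
          intro x hx
          rcases mem_insert.mp hx with rfl | hx
          · exact hmem'
          · rwa [mem_singleton.mp hx]
        have e1 : ∑ x ∈ ({j', j} : Finset (Fin (d + 1))), A.p 1 x i
            = A.p 1 j' i + A.p 1 j i := sum_pair hne
        have e2 : (∑ x ∈ ({j', j} : Finset (Fin (d + 1))), A.p 1 x i)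
            ≤ ∑ x ∈ univ.filter (fun j'' : Fin (d + 1) =>
              (A.diagram 1).dist 0 j'' + 1 = (A.diagram 1).dist 0 i), A.p 1 x i :=
          sum_le_sum_of_subset hsub
        omega
      -- c j
      have hcj : j = 0 ∨ (∑ j' ∈ univ.filter (fun j' : Fin (d + 1) =>
          (A.diagram 1).dist 0 j' + 1 = (A.diagram 1).dist 0 j), A.p 1 j' j) = 1 := by
        rcases eq_or_ne j 0 with rfl | hj0
        · exact Or.inl rfl
        · right
          have hgeo : (A.diagram 1).dist 0 j + (A.diagram 1).dist j i
              = (A.diagram 1).dist 0 i := by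
            rw [SimpleGraph.dist_eq_one_iff_adj.mpr hadj.symm, hdist, hdj]
            omega
          have hle := A.sum_c_mono_geo hd hconn hgeo
          have hge := A.sum_c_pos hd hconn hj0
          omega
      obtain ⟨q0, ⟨hq0path, hq0len⟩, hq0uniq⟩ := IH (n - 1) (by omega) j hdj hcj
      have hDj0 : (A.diagram 1).dist j 0 = n - 1 := by
        rw [SimpleGraph.dist_comm]; exact hdj
      set qq : (A.diagram 1).Walk i 0 := SimpleGraph.Walk.cons hadj q0 with hqdef
      have hqlen : qq.length = (A.diagram 1).dist i 0 := by
        rw [hqdef, SimpleGraph.Walk.length_cons, hq0len, hDj0, hDio]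
        omega
      refine ⟨qq, ⟨qq.isPath_of_length_eq_dist hqlen, hqlen⟩, ?_⟩
      rintro q' ⟨hq'path, hq'len⟩
      cases q' with
      | nil =>
        simp only [SimpleGraph.Walk.length_nil] at hq'len
        omega
      | cons h2 r =>
        rename_i j'
        simp only [SimpleGraph.Walk.length_cons, hDio] at hq'len
        have hdj' : (A.diagram 1).dist 0 j' = n - 1 := by
          have h1 : (A.diagram 1).dist 0 j' ≤ n - 1 := by
            have := SimpleGraph.dist_le r.reverse
            rw [SimpleGraph.Walk.length_reverse] at this
            omega
          have h2' : (A.diagram 1).dist 0 i ≤ (A.diagram 1).dist 0 j' + 1 := by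
            have t := Hconn.dist_triangle (u := (0 : Fin (d+1))) (v := j') (w := i)
            have : (A.diagram 1).dist j' i = 1 :=
              SimpleGraph.dist_eq_one_iff_adj.mpr h2.symm
            omega
          omega
        have hj'eq : j' = j := huniqj j' h2 hdj'
        subst hj'eq
        have hreq : r = q0 := by
          refine hq0uniq r ⟨hq'path.of_cons, ?_⟩
          rw [hDj0]
          omega
        rw [hreq]

end SymAssocScheme

open SymAssocScheme in
/-- Proposition 5.4: with `Γ = (X, R_1)` connected, `H` the distribution diagram of
`R_1`, and `c i = ∑_{j : d_H(0,j)+1 = d_H(0,i)} p_{1j}^i`: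
(a) along any geodesic `0 = ℓ_0, 1 = ℓ_1, …, ℓ_h` in `H` we have
`1 = c(ℓ_1) ≤ c(ℓ_2) ≤ ⋯ ≤ c(ℓ_h)`;
(b) if `c i = 1` then `c l = 1` for every `l ≠ 0` lying on a geodesic from `0` to `i`;
(c) if `c i = 1` then the shortest path from `0` to `i` in `H` is unique, and for any
`(a,b) ∈ R_i` the shortest path from `a` to `b` in `Γ` is unique. -/
theorem c_monotone_and_unique_geodesics {X : Type*} [Fintype X] {d : ℕ} (hd : 0 < d)
    (A : SymAssocScheme X d) (hconn : (A.graph 1).Connected)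
    (c : Fin (d + 1) → ℕ)
    (hc : ∀ i : Fin (d + 1), c i = ∑ j ∈ Finset.univ.filter
        (fun j : Fin (d + 1) =>
          (A.diagram 1).dist 0 j + 1 = (A.diagram 1).dist 0 i), A.p 1 j i) :
    (∀ (h : ℕ) (ℓ : ℕ → Fin (d + 1)), 1 ≤ h → ℓ 0 = 0 → ℓ 1 = 1 →
      (∀ s < h, (A.diagram 1).Adj (ℓ s) (ℓ (s + 1))) →
      (A.diagram 1).dist 0 (ℓ h) = h →
      c (ℓ 1) = 1 ∧ ∀ s, 1 ≤ s → s < h → c (ℓ s) ≤ c (ℓ (s + 1))) ∧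
    (∀ i l : Fin (d + 1), c i = 1 → l ≠ 0 →
      (A.diagram 1).dist 0 l + (A.diagram 1).dist l i = (A.diagram 1).dist 0 i →
      c l = 1) ∧
    (∀ i : Fin (d + 1), c i = 1 →
      (∃! q : (A.diagram 1).Walk 0 i,
        q.IsPath ∧ q.length = (A.diagram 1).dist 0 i) ∧
      ∀ a b : X, A.R i a b →
        ∃! q : (A.graph 1).Walk a b,
          q.IsPath ∧ q.length = (A.graph 1).dist a b) := by
  have Hconn := A.diagram_connected hd hconn
  refine ⟨?_, ?_, ?_⟩
  · -- part (a)
    intro h ℓ hh hl0 hl1 hadj hdisth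
    have hup : ∀ t ≤ h, (A.diagram 1).dist 0 (ℓ t) ≤ t := by
      intro t
      induction t with
      | zero => intro _; rw [hl0, SimpleGraph.dist_self]
      | succ t IHt =>
        intro ht
        have h1 := IHt (by omega)
        have t2 := Hconn.dist_triangle (u := (0 : Fin (d+1))) (v := ℓ t) (w := ℓ (t+1))
        have t3 : (A.diagram 1).dist (ℓ t) (ℓ (t+1)) = 1 :=
          SimpleGraph.dist_eq_one_iff_adj.mpr (hadj t (by omega))
        omega
    have htail : ∀ s t, t + s = h → (A.diagram 1).dist (ℓ t) (ℓ h) ≤ s := by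
      intro s
      induction s with
      | zero => intro t ht; have : t = h := by omega
                subst this; rw [SimpleGraph.dist_self]
      | succ s IHs =>
        intro t ht
        have h1 := IHs (t + 1) (by omega)
        have t2 := Hconn.dist_triangle (u := ℓ t) (v := ℓ (t+1)) (w := ℓ h)
        have t3 : (A.diagram 1).dist (ℓ t) (ℓ (t+1)) = 1 :=
          SimpleGraph.dist_eq_one_iff_adj.mpr (hadj t (by omega))
        omega
    have hdt : ∀ t ≤ h, (A.diagram 1).dist 0 (ℓ t) = t := by
      intro t ht
      have h1 := hup t ht
      have h2 := htail (h - t) t (by omega)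
      have t2 := Hconn.dist_triangle (u := (0 : Fin (d+1))) (v := ℓ t) (w := ℓ h)
      omega
    constructor
    · rw [hl1, hc 1]
      exact A.sum_c_one hd hconn
    · intro s hs1 hsh
      rw [hc (ℓ s), hc (ℓ (s+1))]
      refine A.sum_c_mono_step hd hconn (hadj s hsh) ?_
      rw [hdt s (by omega), hdt (s+1) (by omega)]
  · -- part (b)
    intro i l hci hl0 hgeo
    have hle := A.sum_c_mono_geo hd hconn hgeo
    have hge := A.sum_c_pos hd hconn hl0
    rw [hc i] at hci
    rw [hc l]
    omega
  · -- part (c)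
    intro i hci
    rw [hc i] at hci
    constructor
    · obtain ⟨q0, ⟨hp0, hl0⟩, huniq⟩ :=
        A.unique_geo_diagram hd hconn _ i rfl (Or.inr hci)
      refine ⟨q0.reverse, ⟨hp0.reverse, ?_⟩, ?_⟩
      · rw [SimpleGraph.Walk.length_reverse, hl0, SimpleGraph.dist_comm]
      · rintro q' ⟨hq'p, hq'l⟩
        have hrev := huniq q'.reverse ⟨hq'p.reverse, by
          rw [SimpleGraph.Walk.length_reverse, hq'l, SimpleGraph.dist_comm]⟩
        calc q' = q'.reverse.reverse := (SimpleGraph.Walk.reverse_reverse q').symm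
          _ = q0.reverse := by rw [hrev]
    · intro a b hab
      exact A.unique_geo_graph hd hconn _ i rfl (Or.inr hci) a b hab
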